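/- Variable substitution in formulas is functional: for any formula α, variable x, term t, and formulas β, γ, if α[x/t]≡β and α[x/t]≡γ then β = γ. -/
import Mathlib


/-- Variables, indexed by natural numbers. -/
structure FOVar where
  idx : ℕ
deriving DecidableEq

/-- Function symbols: an index and an arity. -/
structure FOFunc where
  idx : ℕ
  arity : ℕ
deriving DecidableEq

/-- Relation symbols: an index and an arity. -/
structure FORel where
  idx : ℕ
  arity : ℕ
deriving DecidableEq

/-- Length-indexed vectors. -/
inductive Vec (A : Type) : ℕ → Type where
  | nil : Vec A 0
  | cons : ∀ {n}, A → Vec A n → Vec A (n + 1)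

/-- A predicate holds on every element of a vector. -/
inductive Vec.All {A : Type} (P : A → Prop) : ∀ {n}, Vec A n → Prop where
  | nil : Vec.All P Vec.nil
  | cons : ∀ {n x} {xs : Vec A n}, P x → Vec.All P xs → Vec.All P (Vec.cons x xs)

/-- First-order terms. -/
inductive Term : Type where
  | varterm : FOVar → Term
  | functerm : (f : FOFunc) → Vec Term f.arity → Term

/-- First-order formulas. -/
inductive Formula : Type where
  | atom : (r : FORel) → Vec Term r.arity → Formula
  | imp : Formula → Formula → Formula
  | and : Formula → Formula → Formula
  | or : Formula → Formula → Formula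
  | all : FOVar → Formula → Formula
  | ex : FOVar → Formula → Formula

/-- The variable x does not occur in a term. -/
inductive NotInTerm (x : FOVar) : Term → Prop where
  | varterm : ∀ {y}, x ≠ y → NotInTerm x (Term.varterm y)
  | functerm : ∀ {f} {us : Vec Term f.arity},
      Vec.All (NotInTerm x) us → NotInTerm x (Term.functerm f us)

/-- The variable x does not occur in any term of a vector. -/
def NotInTerms {n : ℕ} (x : FOVar) (ts : Vec Term n) : Prop :=
  Vec.All (NotInTerm x) ts

/-- The variable x is not free in a formula. -/
inductive NotFreeIn : FOVar → Formula → Prop where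
  | atom : ∀ {x r} {ts : Vec Term r.arity},
      NotInTerms x ts → NotFreeIn x (Formula.atom r ts)
  | imp : ∀ {x α β}, NotFreeIn x α → NotFreeIn x β → NotFreeIn x (Formula.imp α β)
  | and : ∀ {x α β}, NotFreeIn x α → NotFreeIn x β → NotFreeIn x (Formula.and α β)
  | or : ∀ {x α β}, NotFreeIn x α → NotFreeIn x β → NotFreeIn x (Formula.or α β)
  | all_self : ∀ x α, NotFreeIn x (Formula.all x α)
  | ex_self : ∀ x α, NotFreeIn x (Formula.ex x α)
  | all : ∀ {x α} (y : FOVar), NotFreeIn x α → NotFreeIn x (Formula.all y α)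
  | ex : ∀ {x α} (y : FOVar), NotFreeIn x α → NotFreeIn x (Formula.ex y α)

mutual
/-- ⟨u⟩[x/t]≡v : substituting t for x in the term u yields v. -/
inductive TermSub : Term → FOVar → Term → Term → Prop where
  | var_eq : ∀ {x t}, TermSub (Term.varterm x) x t t
  | var_ne : ∀ {x t y}, x ≠ y → TermSub (Term.varterm y) x t (Term.varterm y)
  | functerm : ∀ {x t f} {us vs : Vec Term f.arity},
      TermsSub us x t vs → TermSub (Term.functerm f us) x t (Term.functerm f vs)

/-- [us][x/t]≡vs : componentwise substitution in vectors of terms. -/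
inductive TermsSub : ∀ {n}, Vec Term n → FOVar → Term → Vec Term n → Prop where
  | nil : ∀ {x t}, TermsSub Vec.nil x t Vec.nil
  | cons : ∀ {x t u v n} {us vs : Vec Term n},
      TermSub u x t v → TermsSub us x t vs →
      TermsSub (Vec.cons u us) x t (Vec.cons v vs)
end

/-- α[x/t]≡β : substituting t for all free occurrences of x in α yields β. -/
inductive FormulaSub : Formula → FOVar → Term → Formula → Prop where
  | ident : ∀ α x, FormulaSub α x (Term.varterm x) α
  | notfree : ∀ {α x t}, NotFreeIn x α → FormulaSub α x t α
  | atom : ∀ {x t} (r : FORel) {us vs : Vec Term r.arity},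
      TermsSub us x t vs → FormulaSub (Formula.atom r us) x t (Formula.atom r vs)
  | imp : ∀ {α α' β β' x t}, FormulaSub α x t α' → FormulaSub β x t β' →
      FormulaSub (Formula.imp α β) x t (Formula.imp α' β')
  | and : ∀ {α α' β β' x t}, FormulaSub α x t α' → FormulaSub β x t β' →
      FormulaSub (Formula.and α β) x t (Formula.and α' β')
  | or : ∀ {α α' β β' x t}, FormulaSub α x t α' → FormulaSub β x t β' →
      FormulaSub (Formula.or α β) x t (Formula.or α' β')
  | all_self : ∀ {t} x α, FormulaSub (Formula.all x α) x t (Formula.all x α)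
  | ex_self : ∀ {t} x α, FormulaSub (Formula.ex x α) x t (Formula.ex x α)
  | all : ∀ {α β x y t}, x ≠ y → NotInTerm y t → FormulaSub α x t β →
      FormulaSub (Formula.all y α) x t (Formula.all y β)
  | ex : ∀ {α β x y t}, x ≠ y → NotInTerm y t → FormulaSub α x t β →
      FormulaSub (Formula.ex y α) x t (Formula.ex y β)

/-- The term t is free for the variable x in a formula. -/
inductive FreeFor (t : Term) (x : FOVar) : Formula → Prop where
  | notfree : ∀ {α}, NotFreeIn x α → FreeFor t x α
  | atom : ∀ r us, FreeFor t x (Formula.atom r us)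
  | imp : ∀ {α β}, FreeFor t x α → FreeFor t x β → FreeFor t x (Formula.imp α β)
  | and : ∀ {α β}, FreeFor t x α → FreeFor t x β → FreeFor t x (Formula.and α β)
  | or : ∀ {α β}, FreeFor t x α → FreeFor t x β → FreeFor t x (Formula.or α β)
  | all_self : ∀ α, FreeFor t x (Formula.all x α)
  | ex_self : ∀ α, FreeFor t x (Formula.ex x α)
  | all : ∀ {α y}, NotInTerm y t → FreeFor t x α → FreeFor t x (Formula.all y α)
  | ex : ∀ {α y}, NotInTerm y t → FreeFor t x α → FreeFor t x (Formula.ex y α)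

/-- The variable x appears nowhere (free or bound) in a formula. -/
inductive FreshIn (x : FOVar) : Formula → Prop where
  | atom : ∀ {r} {ts : Vec Term r.arity}, NotInTerms x ts → FreshIn x (Formula.atom r ts)
  | imp : ∀ {α β}, FreshIn x α → FreshIn x β → FreshIn x (Formula.imp α β)
  | and : ∀ {α β}, FreshIn x α → FreshIn x β → FreshIn x (Formula.and α β)
  | or : ∀ {α β}, FreshIn x α → FreshIn x β → FreshIn x (Formula.or α β)
  | all : ∀ {α y}, y ≠ x → FreshIn x α → FreshIn x (Formula.all y α)
  | ex : ∀ {α y}, y ≠ x → FreshIn x α → FreshIn x (Formula.ex y α)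

/-- Formula equivalence: equality up to renaming of bound variables. -/
inductive FormulaEquiv : Formula → Formula → Prop where
  | atom : ∀ r ts, FormulaEquiv (Formula.atom r ts) (Formula.atom r ts)
  | imp : ∀ {α β α' β'}, FormulaEquiv α α' → FormulaEquiv β β' →
      FormulaEquiv (Formula.imp α β) (Formula.imp α' β')
  | and : ∀ {α β α' β'}, FormulaEquiv α α' → FormulaEquiv β β' →
      FormulaEquiv (Formula.and α β) (Formula.and α' β')
  | or : ∀ {α β α' β'}, FormulaEquiv α α' → FormulaEquiv β β' →
      FormulaEquiv (Formula.or α β) (Formula.or α' β')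
  | all : ∀ {α α'} (x : FOVar), FormulaEquiv α α' → FormulaEquiv (Formula.all x α) (Formula.all x α')
  | ex : ∀ {α α'} (x : FOVar), FormulaEquiv α α' → FormulaEquiv (Formula.ex x α) (Formula.ex x α')
  | all_rename : ∀ {α β β' x y}, NotFreeIn y α →
      FormulaSub α x (Term.varterm y) β → FormulaEquiv β β' →
      FormulaEquiv (Formula.all x α) (Formula.all y β')
  | ex_rename : ∀ {α β β' x y}, NotFreeIn y α →
      FormulaSub α x (Term.varterm y) β → FormulaEquiv β β' →
      FormulaEquiv (Formula.ex x α) (Formula.ex y β')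
  | all_rename' : ∀ {α α' β' x y}, FormulaEquiv α α' → NotFreeIn y α' →
      FormulaSub α' x (Term.varterm y) β' →
      FormulaEquiv (Formula.all x α) (Formula.all y β')
  | ex_rename' : ∀ {α α' β' x y}, FormulaEquiv α α' → NotFreeIn y α' →
      FormulaSub α' x (Term.varterm y) β' →
      FormulaEquiv (Formula.ex x α) (Formula.ex y β')

/-- Natural deduction for minimal first-order logic. -/
inductive Deduction : Set Formula → Formula → Prop where
  | assume : ∀ (α : Formula), Deduction {α} α
  | close : ∀ {Γ Δ : Set Formula} {α}, Γ ⊆ Δ → Deduction Γ α → Deduction Δ α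
  | arrowintro : ∀ {Γ β} (α : Formula), Deduction Γ β →
      Deduction (Γ \ {α}) (Formula.imp α β)
  | arrowelim : ∀ {Γ₁ Γ₂ α β}, Deduction Γ₁ (Formula.imp α β) → Deduction Γ₂ α →
      Deduction (Γ₁ ∪ Γ₂) β
  | conjintro : ∀ {Γ₁ Γ₂ α β}, Deduction Γ₁ α → Deduction Γ₂ β →
      Deduction (Γ₁ ∪ Γ₂) (Formula.and α β)
  | conjelim : ∀ {Γ₁ Γ₂ α β γ}, Deduction Γ₁ (Formula.and α β) → Deduction Γ₂ γ →
      Deduction (Γ₁ ∪ (Γ₂ \ {α, β})) γ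
  | disjintro1 : ∀ {Γ α} (β : Formula), Deduction Γ α → Deduction Γ (Formula.or α β)
  | disjintro2 : ∀ {Γ β} (α : Formula), Deduction Γ β → Deduction Γ (Formula.or α β)
  | disjelim : ∀ {Γ₁ Γ₂ Γ₃ α β γ}, Deduction Γ₁ (Formula.or α β) →
      Deduction Γ₂ γ → Deduction Γ₃ γ →
      Deduction (Γ₁ ∪ (Γ₂ \ {α}) ∪ (Γ₃ \ {β})) γ
  | univintro : ∀ {Γ α} (x : FOVar), (∀ γ ∈ Γ, NotFreeIn x γ) →
      Deduction Γ α → Deduction Γ (Formula.all x α)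
  | univelim : ∀ {Γ α x β} (t : Term), FormulaSub α x t β →
      Deduction Γ (Formula.all x α) → Deduction Γ β
  | existintro : ∀ {Γ α β} (t : Term) (x : FOVar), FormulaSub α x t β →
      Deduction Γ β → Deduction Γ (Formula.ex x α)
  | existelim : ∀ {Γ₁ Γ₂ α β x}, NotFreeIn x β → (∀ γ ∈ Γ₂ \ {α}, NotFreeIn x γ) →
      Deduction Γ₁ (Formula.ex x α) → Deduction Γ₂ β →
      Deduction (Γ₁ ∪ (Γ₂ \ {α})) β

/-- ⊥: the atom of a fixed nullary relation symbol. -/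
def Formula.bot : Formula := Formula.atom ⟨0, 0⟩ Vec.nil

/-- ¬α is α ⇒ ⊥. -/
def Formula.neg (α : Formula) : Formula := Formula.imp α Formula.bot

mutual
theorem termSub_functional : ∀ {u : Term} {x t v w}, TermSub u x t v → TermSub u x t w → v = w
  | _, _, _, _, _, .var_eq, .var_eq => rfl
  | _, _, _, _, _, .var_eq, .var_ne h => absurd rfl h
  | _, _, _, _, _, .var_ne h, .var_eq => absurd rfl h
  | _, _, _, _, _, .var_ne _, .var_ne _ => rfl
  | _, _, _, _, _, .functerm h1, .functerm h2 => by
      rw [termsSub_functional h1 h2]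

theorem termsSub_functional : ∀ {n} {us : Vec Term n} {x t vs ws},
    TermsSub us x t vs → TermsSub us x t ws → vs = ws
  | _, _, _, _, _, _, .nil, .nil => rfl
  | _, _, _, _, _, _, .cons h1 h1s, .cons h2 h2s => by
      rw [termSub_functional h1 h2, termsSub_functional h1s h2s]
end

mutual
theorem notInTerm_sub : ∀ {u : Term} {x t v}, NotInTerm x u → TermSub u x t v → v = u
  | _, _, _, _, .varterm h, .var_eq => absurd rfl h
  | _, _, _, _, _, .var_ne _ => rfl
  | _, _, _, _, .functerm h, .functerm hs => by
      rw [notInTerms_sub h hs]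

theorem notInTerms_sub : ∀ {n} {us : Vec Term n} {x t vs},
    Vec.All (NotInTerm x) us → TermsSub us x t vs → vs = us
  | _, _, _, _, _, _, .nil => rfl
  | _, _, _, _, _, .cons h hs, .cons h1 h1s => by
      rw [notInTerm_sub h h1, notInTerms_sub hs h1s]
end

theorem termSub_ident : ∀ {u : Term} {x v}, TermSub u x (Term.varterm x) v → v = u
  | _, _, _, .var_eq => rfl
  | _, _, _, .var_ne _ => rfl
  | _, _, _, .functerm hs => by
      rw [termsSub_ident hs]
where
  termsSub_ident : ∀ {n} {us : Vec Term n} {x vs},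
      TermsSub us x (Term.varterm x) vs → vs = us
    | _, _, _, _, .nil => rfl
    | _, _, _, _, .cons h hs => by
        rw [termSub_ident h, termsSub_ident hs]

theorem notFree_sub {α : Formula} {x t β} (hnf : NotFreeIn x α)
    (h : FormulaSub α x t β) : β = α := by
  induction h with
  | ident => rfl
  | notfree => rfl
  | atom r hs =>
      cases hnf with
      | atom hts => rw [notInTerms_sub hts hs]
  | imp _ _ ih1 ih2 => cases hnf with
      | imp h1 h2 => rw [ih1 h1, ih2 h2]
  | and _ _ ih1 ih2 => cases hnf with
      | and h1 h2 => rw [ih1 h1, ih2 h2]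
  | or _ _ ih1 ih2 => cases hnf with
      | or h1 h2 => rw [ih1 h1, ih2 h2]
  | all_self => rfl
  | ex_self => rfl
  | all hne _ _ ih =>
      cases hnf with
      | all_self => exact absurd rfl hne
      | all _ h => rw [ih h]
  | ex hne _ _ ih =>
      cases hnf with
      | ex_self => exact absurd rfl hne
      | ex _ h => rw [ih h]

theorem formulaSub_ident_aux {α : Formula} {x t β}
    (h : FormulaSub α x t β) (ht : t = Term.varterm x) : β = α := by
  induction h with
  | ident => rfl
  | notfree => rfl
  | atom r hs => subst ht; rw [termSub_ident.termsSub_ident hs]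
  | imp _ _ ih1 ih2 => rw [ih1 ht, ih2 ht]
  | and _ _ ih1 ih2 => rw [ih1 ht, ih2 ht]
  | or _ _ ih1 ih2 => rw [ih1 ht, ih2 ht]
  | all_self => rfl
  | ex_self => rfl
  | all _ _ _ ih => rw [ih ht]
  | ex _ _ _ ih => rw [ih ht]

theorem formulaSub_ident {α : Formula} {x β}
    (h : FormulaSub α x (Term.varterm x) β) : β = α :=
  formulaSub_ident_aux h rfl

/-- Variable substitution in formulas is functional. -/
theorem formulaSub_functional {α : Formula} {x : FOVar} {t : Term} {β γ : Formula}
    (h₁ : FormulaSub α x t β) (h₂ : FormulaSub α x t γ) : β = γ := by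
  induction h₁ generalizing γ with
  | ident => exact (formulaSub_ident h₂).symm
  | notfree hnf => exact (notFree_sub hnf h₂).symm
  | atom r hs =>
      cases h₂ with
      | ident => exact formulaSub_ident (FormulaSub.atom r hs)
      | notfree hnf => exact notFree_sub hnf (FormulaSub.atom r hs)
      | atom _ hs' => rw [termsSub_functional hs hs']
  | imp hα hβ ih1 ih2 =>
      cases h₂ with
      | ident => exact formulaSub_ident (FormulaSub.imp hα hβ)
      | notfree hnf => exact notFree_sub hnf (FormulaSub.imp hα hβ)
      | imp h1 h2 => rw [ih1 h1, ih2 h2]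
  | and hα hβ ih1 ih2 =>
      cases h₂ with
      | ident => exact formulaSub_ident (FormulaSub.and hα hβ)
      | notfree hnf => exact notFree_sub hnf (FormulaSub.and hα hβ)
      | and h1 h2 => rw [ih1 h1, ih2 h2]
  | or hα hβ ih1 ih2 =>
      cases h₂ with
      | ident => exact formulaSub_ident (FormulaSub.or hα hβ)
      | notfree hnf => exact notFree_sub hnf (FormulaSub.or hα hβ)
      | or h1 h2 => rw [ih1 h1, ih2 h2]
  | all_self y α =>
      cases h₂ with
      | ident => rfl
      | notfree => rfl
      | all_self => rfl
      | all hne _ _ => exact absurd rfl hne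
  | ex_self y α =>
      cases h₂ with
      | ident => rfl
      | notfree => rfl
      | ex_self => rfl
      | ex hne _ _ => exact absurd rfl hne
  | all hne hnit hsub ih =>
      cases h₂ with
      | ident => exact formulaSub_ident (FormulaSub.all hne hnit hsub)
      | notfree hnf => exact notFree_sub hnf (FormulaSub.all hne hnit hsub)
      | all_self => exact absurd rfl hne
      | all _ _ h => rw [ih h]
  | ex hne hnit hsub ih =>
      cases h₂ with
      | ident => exact formulaSub_ident (FormulaSub.ex hne hnit hsub)
      | notfree hnf => exact notFree_sub hnf (FormulaSub.ex hne hnit hsub)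
      | ex_self => exact absurd rfl hne
      | ex _ _ h => rw [ih h]
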